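/- Let b ∈ C_A and k ∈ {1,…,N}. If the dimension of Q^k_{A,b} := Q_{A,b} ∩ {x ∈ ℝ^d : a_kᵀx = b_k} is at most d − 2, then either the dimension of Q_{A,b} is at most d − 1, or there exists an extreme point p of Q*_{A,a_k} with p ≠ e_k and bᵀp = b_k. -/

import Mathlib

open scoped RealInnerProductSpace

noncomputable section

/-- `Q_{A,b} = {x ∈ ℝ^d : a_iᵀx ≤ b_i for all i}`. -/
def Qset {d N : ℕ} (a : Fin N → EuclideanSpace ℝ (Fin d)) (b : Fin N → ℝ) :
    Set (EuclideanSpace ℝ (Fin d)) :=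
  {x | ∀ i, ⟪a i, x⟫ ≤ b i}

/-- `C_A = {b : for every i there is x ∈ Q_{A,b} with a_iᵀx = b_i}`. -/
def CA {d N : ℕ} (a : Fin N → EuclideanSpace ℝ (Fin d)) : Set (Fin N → ℝ) :=
  {b | ∀ i, ∃ x ∈ Qset a b, ⟪a i, x⟫ = b i}

/-- `Q*_{A,c} = {p ∈ ℝ^N : p ≥ 0, Aᵀp = c}`. -/
def Qstar {d N : ℕ} (a : Fin N → EuclideanSpace ℝ (Fin d)) (c : EuclideanSpace ℝ (Fin d)) :
    Set (Fin N → ℝ) :=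
  {p | (∀ i, 0 ≤ p i) ∧ ∑ i, p i • a i = c}

/-- The facet `Q^k_{A,b} = Q_{A,b} ∩ {x : a_kᵀx = b_k}`. -/
def Qfacet {d N : ℕ} (a : Fin N → EuclideanSpace ℝ (Fin d)) (b : Fin N → ℝ) (k : Fin N) :
    Set (EuclideanSpace ℝ (Fin d)) :=
  Qset a b ∩ {x | ⟪a k, x⟫ = b k}

/-- The dimension of a convex subset of `ℝ^d`: the dimension of (the direction of)
its affine hull. -/
def convDim {d : ℕ} (S : Set (EuclideanSpace ℝ (Fin d))) : ℕ :=
  Module.finrank ℝ (affineSpan ℝ S).direction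

section Farkas

variable {E : Type*} [NormedAddCommGroup E] [InnerProductSpace ℝ E] [FiniteDimensional ℝ E]
variable {ι : Type*} [Fintype ι]

/-- Conic Carathéodory, auxiliary induction. -/
lemma cone_carath_aux (v : ι → E) :
    ∀ (m : ℕ) (lam : ι → ℝ), (∀ i, 0 ≤ lam i) →
      (Finset.univ.filter fun i => lam i ≠ 0).card ≤ m →
    ∃ (s : Finset ι) (mu : ι → ℝ),
      LinearIndependent ℝ (fun i : s => v i) ∧ (∀ i, 0 ≤ mu i) ∧ (∀ i ∉ s, mu i = 0) ∧
      ∑ i, mu i • v i = ∑ i, lam i • v i := by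
  classical
  intro m
  induction m with
  | zero =>
    intro lam hlam hcard
    have hz : ∀ i, lam i = 0 := by
      intro i
      by_contra h
      have : i ∈ Finset.univ.filter fun i => lam i ≠ 0 := by simp [h]
      have := Finset.card_pos.mpr ⟨i, this⟩
      omega
    refine ⟨∅, lam, ?_, hlam, fun i _ => hz i, rfl⟩
    exact linearIndependent_empty_type
  | succ m ih =>
    intro lam hlam hcard
    set T := Finset.univ.filter fun i => lam i ≠ 0 with hT
    by_cases hLI : LinearIndependent ℝ (fun i : T => v i)
    · refine ⟨T, lam, hLI, hlam, ?_, rfl⟩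
      intro i hi
      by_contra h
      exact hi (by simp [hT, h])
    · -- get a dependence relation supported on T
      obtain ⟨g, hgsum, i₁, hgi₁⟩ := Fintype.not_linearIndependent_iff.mp hLI
      set c : ι → ℝ := fun i => if h : i ∈ T then g ⟨i, h⟩ else 0 with hc
      have hcsupp : ∀ i ∉ T, c i = 0 := by intro i hi; simp [hc, hi]
      have hcsum : ∑ i, c i • v i = 0 := by
        have h1 : ∑ i, c i • v i = ∑ i ∈ T, c i • v i :=
          (Finset.sum_subset (Finset.subset_univ T)
            (fun i _ hi => by simp [hcsupp i hi])).symm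
        rw [h1, ← Finset.sum_attach T (fun i => c i • v i), ← hgsum,
          Finset.univ_eq_attach]
        refine Finset.sum_congr rfl (fun i _ => ?_)
        simp [hc]
      have hcne : c i₁.val ≠ 0 := by simp [hc, i₁.2, hgi₁]
      -- WLOG some coordinate of c is positive
      obtain ⟨c, hcsupp, hcsum, i₂, hci₂⟩ :
          ∃ c' : ι → ℝ, (∀ i ∉ T, c' i = 0) ∧ (∑ i, c' i • v i = 0) ∧ ∃ i, 0 < c' i := by
        rcases lt_or_gt_of_ne hcne with h | h
        · refine ⟨-c, fun i hi => by simp [hcsupp i hi], ?_, i₁, by simpa using h⟩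
          simp [neg_smul, Finset.sum_neg_distrib, hcsum]
        · exact ⟨c, hcsupp, hcsum, i₁, h⟩
      have hi₂T : i₂ ∈ T := by
        by_contra h; rw [hcsupp i₂ h] at hci₂; exact lt_irrefl _ hci₂
      set S := T.filter fun i => 0 < c i with hS
      have hSne : S.Nonempty := ⟨i₂, by simp [hS, hi₂T, hci₂]⟩
      obtain ⟨i₀, hi₀S, hi₀min⟩ := S.exists_min_image (fun i => lam i / c i) hSne
      have hi₀T : i₀ ∈ T := (Finset.mem_filter.mp hi₀S).1
      have hci₀ : 0 < c i₀ := (Finset.mem_filter.mp hi₀S).2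
      set t := lam i₀ / c i₀ with ht
      have htnn : 0 ≤ t := div_nonneg (hlam i₀) hci₀.le
      set lam' : ι → ℝ := fun i => lam i - t * c i with hlam'
      have hlam'nn : ∀ i, 0 ≤ lam' i := by
        intro i
        rcases le_or_gt (c i) 0 with h | h
        · have : t * c i ≤ 0 := mul_nonpos_of_nonneg_of_nonpos htnn h
          simp only [hlam']; linarith [hlam i]
        · have hiT : i ∈ T := by
            by_contra hh; rw [hcsupp i hh] at h; exact lt_irrefl _ h
          have hiS : i ∈ S := by simp [hS, hiT, h]
          have := hi₀min i hiS
          have hmul : lam i₀ * c i ≤ lam i * c i₀ := (div_le_div_iff₀ hci₀ h).mp this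
          have : t * c i ≤ lam i := by
            rw [ht, div_mul_eq_mul_div, div_le_iff₀ hci₀]
            linarith
          simp only [hlam']; linarith
      have hsub : (Finset.univ.filter fun i => lam' i ≠ 0) ⊆ T.erase i₀ := by
        intro i hi
        simp only [Finset.mem_filter] at hi
        rcases hi with ⟨-, hne⟩
        refine Finset.mem_erase.mpr ⟨?_, ?_⟩
        · rintro rfl
          apply hne
          simp only [hlam', ht]
          field_simp
          ring
        · by_contra hiT
          exact hne (by simp [hlam', hcsupp i hiT, hT, Finset.mem_filter] at hiT ⊢; simpa using hiT)
      have hcard' : (Finset.univ.filter fun i => lam' i ≠ 0).card ≤ m := by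
        have h1 := Finset.card_le_card hsub
        have h2 : (T.erase i₀).card = T.card - 1 := Finset.card_erase_of_mem hi₀T
        have h3 : 1 ≤ T.card := Finset.card_pos.mpr ⟨i₀, hi₀T⟩
        omega
      have hsum' : ∑ i, lam' i • v i = ∑ i, lam i • v i := by
        simp only [hlam', sub_smul, mul_smul, Finset.sum_sub_distrib]
        rw [← Finset.smul_sum, hcsum, smul_zero, sub_zero]
      obtain ⟨s, mu, h1, h2, h3, h4⟩ := ih lam' hlam'nn hcard'
      exact ⟨s, mu, h1, h2, h3, h4.trans hsum'⟩


lemma isClosed_cone (v : ι → E) :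
    IsClosed {x : E | ∃ lam : ι → ℝ, (∀ i, 0 ≤ lam i) ∧ ∑ i, lam i • v i = x} := by
  classical
  have hEq : {x : E | ∃ lam : ι → ℝ, (∀ i, 0 ≤ lam i) ∧ ∑ i, lam i • v i = x} =
      ⋃ s : {s : Finset ι // LinearIndependent ℝ (fun i : s => v i)},
        (fun mu : {i // i ∈ s.1} → ℝ => ∑ i, mu i • v i.val) '' {mu | ∀ i, 0 ≤ mu i} := by
    ext x
    constructor
    · rintro ⟨lam, hlam, rfl⟩
      obtain ⟨s, mu, h1, h2, h3, h4⟩ :=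
        cone_carath_aux v (Finset.univ.filter fun i => lam i ≠ 0).card lam hlam le_rfl
      refine Set.mem_iUnion.mpr ⟨⟨s, h1⟩, ⟨fun i => mu i, fun i => h2 i, ?_⟩⟩
      show ∑ i : {i // i ∈ s}, mu i • v i = _
      rw [Finset.univ_eq_attach, Finset.sum_attach s (fun i => mu i • v i),
        Finset.sum_subset (Finset.subset_univ s) (fun i _ hi => by simp [h3 i hi])]
      exact h4
    · intro hx
      obtain ⟨s, hs⟩ := Set.mem_iUnion.mp hx
      obtain ⟨mu, hmu, rfl⟩ := hs
      refine ⟨fun i => if h : i ∈ s.1 then mu ⟨i, h⟩ else 0, fun i => ?_, ?_⟩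
      · by_cases h : i ∈ s.1 <;> simp [h, hmu _]
      · rw [← Finset.sum_subset (Finset.subset_univ s.1)
          (fun i _ hi => by simp [hi])]
        rw [← Finset.sum_attach s.1
          (fun i => (if h : i ∈ s.1 then mu ⟨i, h⟩ else 0) • v i),
          Finset.univ_eq_attach]
        refine Finset.sum_congr rfl (fun i _ => ?_)
        simp [i.2]
  rw [hEq]
  refine isClosed_iUnion_of_finite (fun s => ?_)
  have hs := s.2
  let L : ({i // i ∈ s.1} → ℝ) →ₗ[ℝ] E :=
    { toFun := fun mu => ∑ i, mu i • v i.val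
      map_add' := by intro x y; simp [add_smul, Finset.sum_add_distrib]
      map_smul' := by intro c x; simp [smul_smul, Finset.smul_sum] }
  have hinj : Function.Injective L := by
    rw [← LinearMap.ker_eq_bot]
    rw [LinearMap.ker_eq_bot']
    intro mu hmu
    have := Fintype.linearIndependent_iff.mp hs mu hmu
    funext i; exact this i
  have hclosed : IsClosed {mu : {i // i ∈ s.1} → ℝ | ∀ i, 0 ≤ mu i} := by
    have : {mu : {i // i ∈ s.1} → ℝ | ∀ i, 0 ≤ mu i} =
        ⋂ i, {mu : {i // i ∈ s.1} → ℝ | 0 ≤ mu i} := by ext; simp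
    rw [this]
    exact isClosed_iInter fun i => isClosed_le continuous_const (continuous_apply i)
  exact (L.isClosedEmbedding_of_injective (LinearMap.ker_eq_bot.mpr hinj)).isClosedMap
    _ hclosed

lemma farkas (v : ι → E) (w : E)
    (h : ∀ y : E, (∀ i, ⟪v i, y⟫ ≤ 0) → ⟪w, y⟫ ≤ 0) :
    ∃ lam : ι → ℝ, (∀ i, 0 ≤ lam i) ∧ ∑ i, lam i • v i = w := by
  classical
  set C : ConvexCone ℝ E :=
    { carrier := {x : E | ∃ lam : ι → ℝ, (∀ i, 0 ≤ lam i) ∧ ∑ i, lam i • v i = x}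
      smul_mem' := by
        rintro t ht x ⟨lam, hlam, rfl⟩
        exact ⟨fun i => t * lam i, fun i => mul_nonneg ht.le (hlam i),
          by simp [mul_smul, Finset.smul_sum]⟩
      add_mem' := by
        rintro x ⟨lam, hlam, rfl⟩ y ⟨lam', hlam', rfl⟩
        exact ⟨lam + lam', fun i => add_nonneg (hlam i) (hlam' i),
          by simp [add_smul, Finset.sum_add_distrib]⟩ } with hC
  by_contra hw
  have hwC : w ∉ C := by
    intro hmem
    exact hw hmem
  obtain ⟨y, hy1, hy2⟩ : ∃ y, (∀ x ∈ C, 0 ≤ ⟪x, y⟫) ∧ ⟪y, w⟫ < 0 := by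
    let P : ProperCone ℝ E :=
      { toSubmodule := C.toPointedCone ⟨fun i => 0, fun i => le_rfl, by simp⟩
        isClosed' := isClosed_cone v }
    obtain ⟨y, hy1, hy2⟩ := ProperCone.hyperplane_separation' P (x₀ := w) hwC
    exact ⟨y, hy1, by rwa [real_inner_comm]⟩
  have hvy : ∀ i, ⟪v i, -y⟫ ≤ 0 := by
    intro i
    have : (v i) ∈ C := ⟨fun j => if j = i then 1 else 0, fun j => by positivity,
      by simp [ite_smul, Finset.sum_ite_eq']⟩
    have := hy1 _ this
    rw [inner_neg_right]
    linarith
  have := h (-y) hvy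
  rw [inner_neg_right] at this
  rw [real_inner_comm] at hy2
  linarith

end Farkas

section DualPoint

lemma exists_dual_point {d N : ℕ} (a : Fin N → EuclideanSpace ℝ (Fin d)) (b : Fin N → ℝ)
    (k j : Fin N) (hj : j ≠ k)
    (xF : EuclideanSpace ℝ (Fin d)) (hxFQ : xF ∈ Qset a b) (hxFk : ⟪a k, xF⟫ = b k)
    (z : EuclideanSpace ℝ (Fin d)) (hzlt : ∀ i, ⟪a i, z⟫ < b i)
    (heq : ∀ x ∈ Qfacet a b k, ⟪a j, x⟫ = b j) :
    ∃ p : Fin N → ℝ, (∀ i, 0 ≤ p i) ∧ ∑ i, p i • a i = a k ∧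
      ∑ i, b i * p i ≤ b k ∧ 0 < p j := by
  classical
  have hxFF : xF ∈ Qfacet a b k := ⟨hxFQ, hxFk⟩
  set emb : (EuclideanSpace ℝ (Fin d) × ℝ) ≃ₗ[ℝ]
      WithLp 2 (EuclideanSpace ℝ (Fin d) × ℝ) := (WithLp.linearEquiv 2 ℝ _).symm with hemb
  set v : (Fin N ⊕ Bool) → WithLp 2 (EuclideanSpace ℝ (Fin d) × ℝ) := fun i =>
    Sum.casesOn i (fun i => emb (a i, -b i))
      (fun s => if s then emb (-(a k), b k) else emb (0, -1)) with hv
  have hv1 : ∀ i : Fin N, v (Sum.inl i) = emb (a i, -b i) := fun i => rfl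
  have hv2 : v (Sum.inr true) = emb (-(a k), b k) := rfl
  have hv3 : v (Sum.inr false) = emb (0, -1) := rfl
  have hinner : ∀ (u : EuclideanSpace ℝ (Fin d)) (s : ℝ)
      (y : WithLp 2 (EuclideanSpace ℝ (Fin d) × ℝ)),
      ⟪emb (u, s), y⟫ = ⟪u, y.fst⟫ + s * y.snd := by
    intro u s y
    rw [WithLp.prod_inner_apply]
    norm_num [hemb, RCLike.inner_apply]
    ring
  have hfark : ∃ lam : (Fin N ⊕ Bool) → ℝ, (∀ i, 0 ≤ lam i) ∧
      ∑ i, lam i • v i = emb (-(a j), b j) := by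
    apply farkas
    intro y hy
    have h1 : ∀ i : Fin N, ⟪a i, y.fst⟫ + (- b i) * y.snd ≤ 0 := fun i => by
      have := hy (Sum.inl i); rwa [hv1 i, hinner] at this
    have h2 : ⟪-(a k), y.fst⟫ + b k * y.snd ≤ 0 := by
      have := hy (Sum.inr true); rwa [hv2, hinner] at this
    have h3 : ⟪(0 : EuclideanSpace ℝ (Fin d)), y.fst⟫ + (-1) * y.snd ≤ 0 := by
      have := hy (Sum.inr false); rwa [hv3, hinner] at this
    rw [hinner]
    rw [inner_neg_left] at h2 ⊢
    rw [inner_zero_left] at h3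
    have ht : 0 ≤ y.snd := by linarith
    rcases ht.eq_or_lt with h0 | h0
    · have hxd : ∀ i, ⟪a i, y.fst⟫ ≤ 0 := fun i => by
        have := h1 i; rw [← h0] at this; linarith
      have hk0 : ⟪a k, y.fst⟫ = 0 := by
        refine le_antisymm (hxd k) ?_
        rw [← h0] at h2; linarith
      have hmem : xF + y.fst ∈ Qfacet a b k := by
        refine ⟨fun i => ?_, ?_⟩
        · rw [inner_add_right]
          have h4 := hxFQ i; have h5 := hxd i; linarith
        · show ⟪a k, xF + y.fst⟫ = b k
          rw [inner_add_right, hxFk, hk0, add_zero]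
      have e1 := heq _ hmem
      have e2 := heq _ hxFF
      rw [inner_add_right, e2] at e1
      rw [← h0]
      linarith
    · have hx' : ∀ i, ⟪a i, (y.snd)⁻¹ • y.fst⟫ ≤ b i := fun i => by
        rw [real_inner_smul_right, inv_mul_le_iff₀ h0]
        have := h1 i; nlinarith
      have hk' : ⟪a k, (y.snd)⁻¹ • y.fst⟫ = b k := by
        refine le_antisymm (hx' k) ?_
        rw [real_inner_smul_right, le_inv_mul_iff₀ h0]
        nlinarith
      have hmem : (y.snd)⁻¹ • y.fst ∈ Qfacet a b k := ⟨hx', hk'⟩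
      have e1 := heq _ hmem
      rw [real_inner_smul_right, inv_mul_eq_iff_eq_mul₀ (ne_of_gt h0)] at e1
      nlinarith [e1]
  obtain ⟨lam, hlam, hlamsum⟩ := hfark
  let π₁ : WithLp 2 (EuclideanSpace ℝ (Fin d) × ℝ) →ₗ[ℝ] EuclideanSpace ℝ (Fin d) :=
    (LinearMap.fst ℝ _ _).comp (WithLp.linearEquiv 2 ℝ _).toLinearMap
  let π₂ : WithLp 2 (EuclideanSpace ℝ (Fin d) × ℝ) →ₗ[ℝ] ℝ :=
    (LinearMap.snd ℝ _ _).comp (WithLp.linearEquiv 2 ℝ _).toLinearMap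
  have hπ₁ : ∀ (u : EuclideanSpace ℝ (Fin d)) (s : ℝ), π₁ (emb (u, s)) = u :=
    fun u s => rfl
  have hπ₂ : ∀ (u : EuclideanSpace ℝ (Fin d)) (s : ℝ), π₂ (emb (u, s)) = s :=
    fun u s => rfl
  have hA : ∑ i, lam (Sum.inl i) • a i - lam (Sum.inr true) • a k = -(a j) := by
    have h := congrArg π₁ hlamsum
    rw [map_sum, Fintype.sum_sum_type, Fintype.sum_bool, hπ₁] at h
    rw [← h]
    have e1 : ∑ i : Fin N, π₁ (lam (Sum.inl i) • v (Sum.inl i))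
        = ∑ i : Fin N, lam (Sum.inl i) • a i :=
      Finset.sum_congr rfl fun i _ => by rw [map_smul, hv1 i, hπ₁]
    have e2 : π₁ (lam (Sum.inr true) • v (Sum.inr true))
        = lam (Sum.inr true) • (-(a k)) := by rw [map_smul, hv2, hπ₁]
    have e3 : π₁ (lam (Sum.inr false) • v (Sum.inr false))
        = lam (Sum.inr false) • (0 : EuclideanSpace ℝ (Fin d)) := by
      rw [map_smul, hv3, hπ₁]
    rw [e1, e2, e3, smul_neg, smul_zero, add_zero, ← sub_eq_add_neg]
  have hB : -(∑ i, lam (Sum.inl i) * b i) + lam (Sum.inr true) * b k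
      - lam (Sum.inr false) = b j := by
    have h := congrArg π₂ hlamsum
    rw [map_sum, Fintype.sum_sum_type, Fintype.sum_bool, hπ₂] at h
    rw [← h]
    have e1 : ∑ i : Fin N, π₂ (lam (Sum.inl i) • v (Sum.inl i))
        = ∑ i : Fin N, lam (Sum.inl i) • (-(b i)) :=
      Finset.sum_congr rfl fun i _ => by rw [map_smul, hv1 i, hπ₂]
    have e2 : π₂ (lam (Sum.inr true) • v (Sum.inr true))
        = lam (Sum.inr true) • b k := by rw [map_smul, hv2, hπ₂]
    have e3 : π₂ (lam (Sum.inr false) • v (Sum.inr false))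
        = lam (Sum.inr false) • (-1 : ℝ) := by rw [map_smul, hv3, hπ₂]
    rw [e1, e2, e3]
    simp only [smul_eq_mul]
    have h4 : ∑ i : Fin N, lam (Sum.inl i) * -b i = -∑ i : Fin N, lam (Sum.inl i) * b i := by
      rw [← Finset.sum_neg_distrib]
      exact Finset.sum_congr rfl fun i _ => by ring
    rw [h4]; ring
  rcases (hlam (Sum.inr true)).eq_or_lt with hμ0 | hμpos
  · -- μ = 0 : contradiction with the interior point z
    exfalso
    rw [← hμ0, zero_smul, sub_zero] at hA
    rw [← hμ0, zero_mul, add_zero] at hB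
    have hAz : ∑ i, lam (Sum.inl i) * ⟪a i, z⟫ = -⟪a j, z⟫ := by
      rw [← inner_neg_left, ← hA, sum_inner]
      exact Finset.sum_congr rfl fun i _ => (real_inner_smul_left _ _ _).symm
    have hle2 : ∑ i, lam (Sum.inl i) * ⟪a i, z⟫ ≤ ∑ i, lam (Sum.inl i) * b i :=
      Finset.sum_le_sum fun i _ => mul_le_mul_of_nonneg_left (hzlt i).le (hlam (Sum.inl i))
    have hν0 : 0 ≤ lam (Sum.inr false) := hlam (Sum.inr false)
    have hjz := hzlt j
    linarith
  · -- μ > 0 : construct the dual point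
    refine ⟨fun i => (lam (Sum.inl i) + if i = j then 1 else 0) / lam (Sum.inr true),
      fun i => ?_, ?_, ?_, ?_⟩
    · apply div_nonneg _ hμpos.le
      have := hlam (Sum.inl i)
      split <;> linarith
    · have hterm : ∀ i : Fin N,
          ((lam (Sum.inl i) + if i = j then 1 else 0) / lam (Sum.inr true)) • a i
          = (lam (Sum.inr true))⁻¹ • (lam (Sum.inl i) • a i)
            + (if i = j then (lam (Sum.inr true))⁻¹ • a i else 0) := by
        intro i
        by_cases h : i = j
        · rw [if_pos h, if_pos h, div_eq_inv_mul, mul_add, mul_one, add_smul, mul_smul]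
        · rw [if_neg h, if_neg h, add_zero, add_zero, div_eq_inv_mul, mul_smul]
      rw [Finset.sum_congr rfl fun i _ => hterm i, Finset.sum_add_distrib,
        Finset.sum_ite_eq' Finset.univ j (fun i => (lam (Sum.inr true))⁻¹ • a i),
        if_pos (Finset.mem_univ j), ← Finset.smul_sum, ← smul_add]
      have h9 : ∑ i, lam (Sum.inl i) • a i + a j = lam (Sum.inr true) • a k := by
        rw [sub_eq_iff_eq_add] at hA
        rw [hA]; abel
      rw [h9, smul_smul, inv_mul_cancel₀ (ne_of_gt hμpos), one_smul]
    · beta_reduce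
      have hterm : ∀ i : Fin N,
          b i * ((lam (Sum.inl i) + if i = j then 1 else 0) / lam (Sum.inr true))
          = (lam (Sum.inr true))⁻¹ * (lam (Sum.inl i) * b i)
            + (if i = j then (lam (Sum.inr true))⁻¹ * b i else 0) := by
        intro i
        by_cases h : i = j
        · rw [if_pos h, if_pos h]
          field_simp
        · rw [if_neg h, if_neg h, add_zero, add_zero]
          field_simp
      rw [Finset.sum_congr rfl fun i _ => hterm i, Finset.sum_add_distrib,
        Finset.sum_ite_eq' Finset.univ j (fun i => (lam (Sum.inr true))⁻¹ * b i),
        if_pos (Finset.mem_univ j), ← Finset.mul_sum, ← mul_add]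
      have h9 : ∑ i, lam (Sum.inl i) * b i + b j
          = lam (Sum.inr true) * b k - lam (Sum.inr false) := by linarith
      rw [h9]
      have hν0 : 0 ≤ lam (Sum.inr false) := hlam (Sum.inr false)
      rw [mul_sub, ← mul_assoc, inv_mul_cancel₀ (ne_of_gt hμpos), one_mul]
      have : 0 ≤ (lam (Sum.inr true))⁻¹ * lam (Sum.inr false) :=
        mul_nonneg (inv_nonneg.mpr hμpos.le) hν0
      linarith
    · beta_reduce
      rw [if_pos rfl]
      apply div_pos _ hμpos
      have := hlam (Sum.inl j)
      linarith

end DualPoint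

set_option maxHeartbeats 2000000 in
theorem stmt_15 (d N : ℕ) (hd : 1 ≤ d) (hN : 1 ≤ N)
    (a : Fin N → EuclideanSpace ℝ (Fin d))
    (ha_inj : Function.Injective a) (ha_norm : ∀ i, ‖a i‖ = 1)
    (b : Fin N → ℝ) (hb : b ∈ CA a) (k : Fin N)
    (hdim : (convDim (Qfacet a b k) : ℤ) ≤ (d : ℤ) - 2) :
    convDim (Qset a b) ≤ d - 1 ∨
      ∃ p ∈ (Qstar a (a k)).extremePoints ℝ,
        p ≠ Pi.single k 1 ∧ ∑ i, b i * p i = b k := by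
  classical
  by_cases hQ : convDim (Qset a b) ≤ d - 1
  · exact Or.inl hQ
  right
  obtain ⟨xF, hxFQ, hxFk⟩ := hb k
  have hxFF : xF ∈ Qfacet a b k := ⟨hxFQ, hxFk⟩
  -- key inequality
  have key : ∀ p ∈ Qstar a (a k), b k ≤ ∑ i, b i * p i := by
    rintro p ⟨hp, hpsum⟩
    have h1 : ∀ i, p i * ⟪a i, xF⟫ ≤ b i * p i := fun i => by
      rw [mul_comm (b i)]
      exact mul_le_mul_of_nonneg_left (hxFQ i) (hp i)
    calc b k = ⟪a k, xF⟫ := hxFk.symm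
      _ = ∑ i, p i * ⟪a i, xF⟫ := by
          rw [← hpsum, sum_inner]
          exact Finset.sum_congr rfl fun i _ => real_inner_smul_left _ _ _
      _ ≤ ∑ i, b i * p i := Finset.sum_le_sum fun i _ => h1 i
  -- convexity facts
  have hQconv : Convex ℝ (Qset a b) := by
    intro x hx y hy s t hs ht hst i
    have := add_le_add (mul_le_mul_of_nonneg_left (hx i) hs)
      (mul_le_mul_of_nonneg_left (hy i) ht)
    simp only [Qset, Set.mem_setOf_eq] at *
    rw [inner_add_right, real_inner_smul_right, real_inner_smul_right]
    have hbi : s * b i + t * b i = b i := by rw [← add_mul, hst, one_mul]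
    linarith
  have hFconv : Convex ℝ (Qfacet a b k) := by
    rintro x ⟨hx, hxk⟩ y ⟨hy, hyk⟩ s t hs ht hst
    refine ⟨hQconv hx hy hs ht hst, ?_⟩
    simp only [Set.mem_setOf_eq] at *
    rw [inner_add_right, real_inner_smul_right, real_inner_smul_right, hxk, hyk]
    rw [← add_mul, hst, one_mul]
  -- interior point with strict inequalities
  obtain ⟨z, hzlt⟩ : ∃ z, ∀ i, ⟪a i, z⟫ < b i := by
    have hQne : (Qset a b).Nonempty := ⟨xF, hxFQ⟩
    have hfr : Module.finrank ℝ (EuclideanSpace ℝ (Fin d)) = d := finrank_euclideanSpace_fin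
    have hdir : (affineSpan ℝ (Qset a b)).direction = ⊤ := by
      apply Submodule.eq_top_of_finrank_eq
      have hle : convDim (Qset a b) ≤ d := by
        simpa [convDim, hfr] using Submodule.finrank_le (affineSpan ℝ (Qset a b)).direction
      unfold convDim at hQ hle
      rw [hfr]
      omega
    have hspan : affineSpan ℝ (Qset a b) = ⊤ := by
      rwa [← AffineSubspace.direction_eq_top_iff_of_nonempty
        ⟨xF, subset_affineSpan ℝ _ hxFQ⟩]
    have hint : (interior (Qset a b)).Nonempty :=
      hQconv.interior_nonempty_iff_affineSpan_eq_top.mpr hspan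
    obtain ⟨z, hz⟩ := hint
    obtain ⟨ε, hε, hball⟩ := Metric.isOpen_iff.mp isOpen_interior z hz
    refine ⟨z, fun i => ?_⟩
    have hmem : z + (ε/2) • a i ∈ Qset a b := by
      refine interior_subset (hball ?_)
      rw [Metric.mem_ball, dist_eq_norm, add_sub_cancel_left, norm_smul,
        Real.norm_eq_abs, abs_of_pos (by linarith), ha_norm i, mul_one]
      linarith
    have hself : ⟪a i, a i⟫ = 1 := by
      rw [real_inner_self_eq_norm_sq, ha_norm i]; norm_num
    have := hmem i
    rw [inner_add_right, real_inner_smul_right, hself, mul_one] at this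
    linarith
  -- the optimal dual face G
  set G : Set (Fin N → ℝ) := {p | p ∈ Qstar a (a k) ∧ ∑ i, b i * p i = b k} with hG
  -- main claim
  have claim1 : ∃ p ∈ G, p ≠ Pi.single k 1 := by
    by_contra hno
    push_neg at hno
    -- Step 1: strict complementarity via Farkas' lemma
    have hslack : ∀ j, j ≠ k → ∃ x ∈ Qfacet a b k, ⟪a j, x⟫ < b j := by
      intro j hj
      by_contra hcon
      push_neg at hcon
      have heq : ∀ x ∈ Qfacet a b k, ⟪a j, x⟫ = b j := fun x hx =>
        le_antisymm (hx.1 j) (hcon x hx)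
      obtain ⟨p, hp0, hpsum, hple, hpj⟩ :=
        exists_dual_point a b k j hj xF hxFQ hxFk z hzlt heq
      have hpb : ∑ i, b i * p i = b k := le_antisymm hple (key p ⟨hp0, hpsum⟩)
      have hps := hno p ⟨⟨hp0, hpsum⟩, hpb⟩
      rw [hps, Pi.single_apply, if_neg hj] at hpj
      exact lt_irrefl _ hpj
    -- Step 2: a facet point where all other constraints are strictly slack
    have hNne : (N : ℝ) ≠ 0 := Nat.cast_ne_zero.mpr (by omega)
    have hNinv : (0:ℝ) < (N:ℝ)⁻¹ := by positivity
    choose! xc hxc1 hxc2 using hslack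
    set c : Fin N → EuclideanSpace ℝ (Fin d) := fun i => if i = k then xF else xc i with hcdef
    have hcF : ∀ i, c i ∈ Qfacet a b k := by
      intro i
      by_cases h : i = k
      · simp [hcdef, h, hxFF]
      · simp only [hcdef, if_neg h]
        exact hxc1 i h
    set xs : EuclideanSpace ℝ (Fin d) := ∑ i, (N:ℝ)⁻¹ • c i with hxs
    have hsumw : ∑ _i : Fin N, (N:ℝ)⁻¹ = 1 := by
      rw [Finset.sum_const, Finset.card_univ, Fintype.card_fin, nsmul_eq_mul,
        mul_inv_cancel₀ hNne]
    have hxsF : xs ∈ Qfacet a b k :=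
      hFconv.sum_mem (fun i _ => hNinv.le) hsumw (fun i _ => hcF i)
    have hxsinner : ∀ j, ⟪a j, xs⟫ = ∑ i, (N:ℝ)⁻¹ * ⟪a j, c i⟫ := by
      intro j
      rw [hxs, inner_sum]
      exact Finset.sum_congr rfl fun i _ => real_inner_smul_right _ _ _
    have hxsstrict : ∀ j, j ≠ k → ⟪a j, xs⟫ < b j := by
      intro j hj
      rw [hxsinner j]
      have hlt : ∑ i, (N:ℝ)⁻¹ * ⟪a j, c i⟫ < ∑ _i : Fin N, (N:ℝ)⁻¹ * b j := by
        refine Finset.sum_lt_sum (fun i _ => ?_) ⟨j, Finset.mem_univ j, ?_⟩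
        · exact mul_le_mul_of_nonneg_left ((hcF i).1 j) hNinv.le
        · refine mul_lt_mul_of_pos_left ?_ hNinv
          rw [hcdef]; simp only [if_neg hj]
          exact hxc2 j hj
      calc ∑ i, (N:ℝ)⁻¹ * ⟪a j, c i⟫ < ∑ _i : Fin N, (N:ℝ)⁻¹ * b j := hlt
        _ = b j := by
          rw [Finset.sum_const, Finset.card_univ, Fintype.card_fin, nsmul_eq_mul,
            ← mul_assoc, mul_inv_cancel₀ hNne, one_mul]
    -- Step 3: the facet then has dimension ≥ d - 1, contradiction
    set W := (ℝ ∙ (a k))ᗮ with hW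
    set δf : Fin N → ℝ := fun i => if i = k then 1 else b i - ⟪a i, xs⟫ with hδf
    have hδfpos : ∀ i, 0 < δf i := by
      intro i
      by_cases h : i = k
      · simp [hδf, h]
      · simp only [hδf, if_neg h]
        exact sub_pos.mpr (hxsstrict i h)
    obtain ⟨i₀, -, hmin⟩ := Finset.exists_min_image Finset.univ δf ⟨k, Finset.mem_univ k⟩
    have hεpos : 0 < δf i₀ := hδfpos i₀
    have hεle : ∀ i, δf i₀ ≤ δf i := fun i => hmin i (Finset.mem_univ i)
    have hWle : W ≤ (affineSpan ℝ (Qfacet a b k)).direction := by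
      intro w hw
      by_cases hw0 : w = 0
      · rw [hw0]; exact Submodule.zero_mem _
      have hwn : (0:ℝ) < ‖w‖ := norm_pos_iff.mpr hw0
      set u := (δf i₀ / ‖w‖) • w with hu
      have huW : u ∈ W := Submodule.smul_mem _ _ hw
      have hunorm : ‖u‖ = δf i₀ := by
        rw [hu, norm_smul, Real.norm_eq_abs, abs_of_pos (div_pos hεpos hwn),
          div_mul_cancel₀ _ (ne_of_gt hwn)]
      have huk : ⟪a k, u⟫ = 0 :=
        (Submodule.mem_orthogonal _ _).mp huW (a k) (Submodule.mem_span_singleton_self _)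
      have hmemu : xs + u ∈ Qfacet a b k := by
        refine ⟨fun i => ?_, ?_⟩
        · by_cases h : i = k
          · subst h
            rw [inner_add_right, huk, add_zero, hxsF.2]
          · rw [inner_add_right]
            have h5 : ⟪a i, u⟫ ≤ δf i₀ := by
              have := real_inner_le_norm (a i) u
              rwa [ha_norm i, one_mul, hunorm] at this
            have h6 := hεle i
            rw [hδf] at h6
            simp only [if_neg h] at h6
            have h6' : δf i₀ ≤ b i - ⟪a i, xs⟫ := h6
            linarith
        · show ⟪a k, xs + u⟫ = b k
          rw [inner_add_right, huk, add_zero]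
          exact hxsF.2
      have hdirmem : u ∈ (affineSpan ℝ (Qfacet a b k)).direction := by
        have h8 := AffineSubspace.vsub_mem_direction
          (subset_affineSpan ℝ _ hmemu) (subset_affineSpan ℝ _ hxsF)
        rwa [vsub_eq_sub, add_sub_cancel_left] at h8
      have hwu : w = (‖w‖ / δf i₀) • u := by
        rw [hu, smul_smul]
        rw [div_mul_div_comm, mul_comm, div_self (by positivity), one_smul]
      rw [hwu]
      exact Submodule.smul_mem _ _ hdirmem
    haveI : Fact (Module.finrank ℝ (EuclideanSpace ℝ (Fin d)) = (d-1)+1) :=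
      ⟨by rw [finrank_euclideanSpace_fin]; omega⟩
    have hak0 : a k ≠ 0 := by
      intro h
      have := ha_norm k
      rw [h, norm_zero] at this
      norm_num at this
    have hfrW : Module.finrank ℝ W = d - 1 := Submodule.finrank_orthogonal_span_singleton hak0
    have hge : d - 1 ≤ convDim (Qfacet a b k) := by
      rw [← hfrW]
      exact Submodule.finrank_mono hWle
    have hcast : ((d - 1 : ℕ) : ℤ) ≤ (convDim (Qfacet a b k) : ℤ) := Nat.cast_le.mpr hge
    rw [Nat.cast_sub (by exact_mod_cast hd)] at hcast
    push_cast at hcast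
    omega
  -- G is convex and compact
  have hGconv : Convex ℝ G := by
    rintro p ⟨⟨hp, hpsum⟩, hpb⟩ q ⟨⟨hq, hqsum⟩, hqb⟩ s t hs ht hst
    refine ⟨⟨fun i => ?_, ?_⟩, ?_⟩
    · have := add_le_add (mul_le_mul_of_nonneg_left (hp i) hs)
        (mul_le_mul_of_nonneg_left (hq i) ht)
      simpa using add_nonneg (mul_nonneg hs (hp i)) (mul_nonneg ht (hq i))
    · have : ∑ i, ((s • p + t • q) i) • a i
          = s • ∑ i, p i • a i + t • ∑ i, q i • a i := by
        rw [Finset.smul_sum, Finset.smul_sum, ← Finset.sum_add_distrib]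
        refine Finset.sum_congr rfl fun i _ => ?_
        simp [add_smul, smul_smul]
      rw [this, hpsum, hqsum, ← add_smul, hst, one_smul]
    · have : ∑ i, b i * ((s • p + t • q) i)
          = s * ∑ i, b i * p i + t * ∑ i, b i * q i := by
        rw [Finset.mul_sum, Finset.mul_sum, ← Finset.sum_add_distrib]
        refine Finset.sum_congr rfl fun i _ => ?_
        simp only [Pi.add_apply, Pi.smul_apply, smul_eq_mul]
        ring
      rw [this, hpb, hqb, ← add_mul, hst, one_mul]
  have hGcomp : IsCompact G := by
    obtain ⟨δ, hδpos, hδle⟩ : ∃ δ > 0, ∀ i, δ ≤ b i - ⟪a i, z⟫ := by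
      obtain ⟨i₀, -, hmin⟩ := Finset.exists_min_image Finset.univ
        (fun i => b i - ⟪a i, z⟫) ⟨⟨0, hN⟩, Finset.mem_univ _⟩
      exact ⟨b i₀ - ⟪a i₀, z⟫, sub_pos.mpr (hzlt i₀), fun i => hmin i (Finset.mem_univ i)⟩
    have hbound : ∀ p ∈ G, ∀ i, p i ≤ (b k - ⟪a k, z⟫) / δ := by
      rintro p ⟨⟨hp, hpsum⟩, hpb⟩ i
      have hsum : ∑ j, p j * (b j - ⟪a j, z⟫) = b k - ⟪a k, z⟫ := by
        have h0 : ∑ j, p j * ⟪a j, z⟫ = ⟪a k, z⟫ := by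
          rw [← hpsum, sum_inner]
          exact Finset.sum_congr rfl fun j _ => (real_inner_smul_left _ _ _).symm
        calc ∑ j, p j * (b j - ⟪a j, z⟫)
            = ∑ j, b j * p j - ∑ j, p j * ⟪a j, z⟫ := by
              rw [← Finset.sum_sub_distrib]
              exact Finset.sum_congr rfl fun j _ => by ring
          _ = b k - ⟪a k, z⟫ := by rw [hpb, h0]
      have h1 : p i * δ ≤ p i * (b i - ⟪a i, z⟫) :=
        mul_le_mul_of_nonneg_left (hδle i) (hp i)
      have h2 : p i * (b i - ⟪a i, z⟫) ≤ b k - ⟪a k, z⟫ := by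
        rw [← hsum]
        exact Finset.single_le_sum
          (fun j _ => mul_nonneg (hp j) (sub_pos.mpr (hzlt j)).le) (Finset.mem_univ i)
      rw [le_div_iff₀ hδpos]
      linarith
    have hc1 : IsClosed {p : Fin N → ℝ | ∀ i, 0 ≤ p i} := by
      have : {p : Fin N → ℝ | ∀ i, 0 ≤ p i} = ⋂ i, {p : Fin N → ℝ | 0 ≤ p i} := by
        ext; simp
      rw [this]
      exact isClosed_iInter fun i => isClosed_le continuous_const (continuous_apply i)
    have hc2 : IsClosed {p : Fin N → ℝ | ∑ i, p i • a i = a k} :=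
      isClosed_eq (continuous_finset_sum _ fun i _ =>
        (continuous_apply i).smul continuous_const) continuous_const
    have hc3 : IsClosed {p : Fin N → ℝ | ∑ i, b i * p i = b k} :=
      isClosed_eq (continuous_finset_sum _ fun i _ =>
        continuous_const.mul (continuous_apply i)) continuous_const
    have hclosed : IsClosed G := by
      have : G = ({p : Fin N → ℝ | ∀ i, 0 ≤ p i} ∩ {p | ∑ i, p i • a i = a k})
          ∩ {p | ∑ i, b i * p i = b k} := by
        ext p
        simp only [hG, Set.mem_setOf_eq, Set.mem_inter_iff, Qstar]
      rw [this]
      exact (hc1.inter hc2).inter hc3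
    have hbdd : Bornology.IsBounded G := by
      rw [isBounded_iff_forall_norm_le]
      refine ⟨max 0 ((b k - ⟪a k, z⟫) / δ), fun p hp => ?_⟩
      rw [pi_norm_le_iff_of_nonneg (le_max_left _ _)]
      intro i
      rw [Real.norm_eq_abs, abs_of_nonneg (hp.1.1 i)]
      exact le_max_of_le_right (hbound p hp i)
    exact Metric.isCompact_of_isClosed_isBounded hclosed hbdd
  -- an extreme point of G different from e_k
  obtain ⟨q, hqG, hqne⟩ : ∃ q ∈ G.extremePoints ℝ, q ≠ Pi.single k 1 := by
    by_contra hcon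
    push_neg at hcon
    have hsub : G.extremePoints ℝ ⊆ {Pi.single k 1} := fun q hq => hcon q hq
    have := closure_convexHull_extremePoints hGcomp hGconv
    obtain ⟨p, hpG, hpne⟩ := claim1
    apply hpne
    have : G ⊆ {Pi.single k 1} := by
      rw [← this]
      refine closure_minimal ?_ isClosed_singleton
      refine (convexHull_min hsub (convex_singleton _)).trans ?_
      simp
    exact this hpG
  -- q is an extreme point of Qstar
  refine ⟨q, ?_, hqne, hqG.1.2⟩
  obtain ⟨⟨hqQs, hqb⟩, hqext⟩ := hqG
  refine ⟨hqQs, ?_⟩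
  have hface : ∀ x₁ ∈ Qstar a (a k), ∀ x₂ ∈ Qstar a (a k),
      q ∈ openSegment ℝ x₁ x₂ → x₁ ∈ G ∧ x₂ ∈ G := by
    intro x₁ hx₁ x₂ hx₂ hseg
    obtain ⟨s, t, hs, ht, hst, hsum⟩ := hseg
    have e1 := key x₁ hx₁
    have e2 := key x₂ hx₂
    have hq2 : s * ∑ i, b i * x₁ i + t * ∑ i, b i * x₂ i = b k := by
      rw [← hqb, ← hsum]
      rw [Finset.mul_sum, Finset.mul_sum, ← Finset.sum_add_distrib]
      refine (Finset.sum_congr rfl fun i _ => ?_).symm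
      simp only [Pi.add_apply, Pi.smul_apply, smul_eq_mul]
      ring
    have hbk : s * b k + t * b k = b k := by rw [← add_mul, hst, one_mul]
    constructor
    · refine ⟨hx₁, ?_⟩
      by_contra hne
      have hlt : b k < ∑ i, b i * x₁ i := lt_of_le_of_ne e1 (Ne.symm hne)
      have h3 := mul_lt_mul_of_pos_left hlt hs
      have h4 := mul_le_mul_of_nonneg_left e2 ht.le
      linarith
    · refine ⟨hx₂, ?_⟩
      by_contra hne
      have hlt : b k < ∑ i, b i * x₂ i := lt_of_le_of_ne e2 (Ne.symm hne)
      have h3 := mul_lt_mul_of_pos_left hlt ht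
      have h4 := mul_le_mul_of_nonneg_left e1 hs.le
      linarith
  rintro x₁ hx₁ x₂ hx₂ hseg
  obtain ⟨hx₁G, hx₂G⟩ := hface x₁ hx₁ x₂ hx₂ hseg
  exact hqext hx₁G hx₂G hseg


end
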